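/- Let Λ be the Dirichlet-to-Neumann map of the lattice Kirchhoff matrix K with positive conductivities γ1,…,γ12. Then γ2 · |det(Λ({1,2,7},{8,5,6}))| = γ7 · γ10 · |det(Λ({1,2},{5,6}))|; equivalently, the ratio |det(Λ({1,2,7},{8,5,6}))| / |det(Λ({1,2},{5,6}))| equals γ7·γ10/γ2. -/

import Mathlib

open Matrix

/-- The endpoints of the 12 edges of the lattice network (0-based: vertex `v` of the
paper is `v - 1`, edge conductivity `γₖ` of the paper is `γ (k-1)`).  The edges are
{1,9}γ₁, {9,12}γ₂, {6,12}γ₃, {2,10}γ₄, {10,11}γ₅, {5,11}γ₆, {8,9}γ₇, {9,10}γ₈,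
{3,10}γ₉, {7,12}γ₁₀, {11,12}γ₁₁, {4,11}γ₁₂. -/
def edgeEnds : Fin 12 → Fin 12 × Fin 12 :=
  ![(0, 8), (8, 11), (5, 11), (1, 9), (9, 10), (4, 10),
    (7, 8), (8, 9), (2, 9), (6, 11), (10, 11), (3, 10)]

/-- The conductivity between vertices `i` and `j`: `γ e` if some edge `e` joins `i`
and `j`, and `0` otherwise. -/
def condWt (γ : Fin 12 → ℝ) (i j : Fin 12) : ℝ :=
  ∑ e : Fin 12, if edgeEnds e = (i, j) ∨ edgeEnds e = (j, i) then γ e else 0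

/-- The Kirchhoff matrix of the lattice network: `K i j = -γᵢⱼ` off the diagonal and
`K i i = ∑ⱼ γᵢⱼ` on the diagonal. -/
def kirchhoff (γ : Fin 12 → ℝ) : Matrix (Fin 12) (Fin 12) ℝ :=
  Matrix.of fun i j => if i = j then ∑ k : Fin 12, condWt γ i k else -condWt γ i j

/-- The boundary vertices (paper's vertices 1–8) as indices of `Fin 12`. -/
def bdV : Fin 8 → Fin 12 := Fin.castLE (by norm_num)

/-- The interior vertices (paper's vertices 9–12) as indices of `Fin 12`. -/
def intV : Fin 4 → Fin 12 := fun i => i.addNat 8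

/-- The boundary-boundary block `A` of the Kirchhoff matrix. -/
def blockA (γ : Fin 12 → ℝ) : Matrix (Fin 8) (Fin 8) ℝ := (kirchhoff γ).submatrix bdV bdV

/-- The boundary-interior block `B` of the Kirchhoff matrix. -/
def blockB (γ : Fin 12 → ℝ) : Matrix (Fin 8) (Fin 4) ℝ := (kirchhoff γ).submatrix bdV intV

/-- The interior-interior block `C` of the Kirchhoff matrix. -/
def blockC (γ : Fin 12 → ℝ) : Matrix (Fin 4) (Fin 4) ℝ := (kirchhoff γ).submatrix intV intV

/-- The Dirichlet-to-Neumann map `Λ = A - B C⁻¹ Bᵀ` of the lattice network. -/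
noncomputable def dtn (γ : Fin 12 → ℝ) : Matrix (Fin 8) (Fin 8) ℝ :=
  blockA γ - blockB γ * (blockC γ)⁻¹ * (blockB γ)ᵀ

/-! ### Auxiliary explicit computations -/

/-- The determinant of the interior block, in terms of the diagonal entries
`a b c e` and the interior conductivities. -/
def latDabs (a b c e x1 x4 x7 x10 : ℝ) : ℝ :=
  x1 * x1 * x4 * x4 - x1 * x1 * b * c - 2 * x1 * x4 * x7 * x10 - x4 * x4 * a * e + x7 * x7 * x10 * x10 - x7 * x7 * c * e - x10 * x10 * a * b + a * b * c * e

set_option maxHeartbeats 2000000 in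
lemma latD_pos (γ : Fin 12 → ℝ) (hγ : ∀ e, 0 < γ e) :
    0 < latDabs (γ 0 + γ 1 + γ 6 + γ 7) (γ 3 + γ 4 + γ 7 + γ 8) (γ 4 + γ 5 + γ 10 + γ 11) (γ 1 + γ 2 + γ 9 + γ 10) (γ 1) (γ 4) (γ 7) (γ 10) := by
  have h : latDabs (γ 0 + γ 1 + γ 6 + γ 7) (γ 3 + γ 4 + γ 7 + γ 8) (γ 4 + γ 5 + γ 10 + γ 11) (γ 1 + γ 2 + γ 9 + γ 10) (γ 1) (γ 4) (γ 7) (γ 10) =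
      γ 0 * γ 1 * γ 3 * γ 4 + γ 0 * γ 1 * γ 3 * γ 5 + γ 0 * γ 1 * γ 3 * γ 10 + γ 0 * γ 1 * γ 3 * γ 11 + γ 0 * γ 1 * γ 4 * γ 5 + γ 0 * γ 1 * γ 4 * γ 7 + γ 0 * γ 1 * γ 4 * γ 8 + γ 0 * γ 1 * γ 4 * γ 10 + γ 0 * γ 1 * γ 4 * γ 11 + γ 0 * γ 1 * γ 5 * γ 7 + γ 0 * γ 1 * γ 5 * γ 8 + γ 0 * γ 1 * γ 7 * γ 10 + γ 0 * γ 1 * γ 7 * γ 11 + γ 0 * γ 1 * γ 8 * γ 10 + γ 0 * γ 1 * γ 8 * γ 11 + γ 0 * γ 2 * γ 3 * γ 4 + γ 0 * γ 2 * γ 3 * γ 5 + γ 0 * γ 2 * γ 3 * γ 10 + γ 0 * γ 2 * γ 3 * γ 11 + γ 0 * γ 2 * γ 4 * γ 5 + γ 0 * γ 2 * γ 4 * γ 7 + γ 0 * γ 2 * γ 4 * γ 8 + γ 0 * γ 2 * γ 4 * γ 10 + γ 0 * γ 2 * γ 4 * γ 11 + γ 0 * γ 2 * γ 5 * γ 7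 + γ 0 * γ 2 * γ 5 * γ 8 + γ 0 * γ 2 * γ 7 * γ 10 + γ 0 * γ 2 * γ 7 * γ 11 + γ 0 * γ 2 * γ 8 * γ 10 + γ 0 * γ 2 * γ 8 * γ 11 + γ 0 * γ 3 * γ 4 * γ 9 + γ 0 * γ 3 * γ 4 * γ 10 + γ 0 * γ 3 * γ 5 * γ 9 + γ 0 * γ 3 * γ 5 * γ 10 + γ 0 * γ 3 * γ 9 * γ 10 + γ 0 * γ 3 * γ 9 * γ 11 + γ 0 * γ 3 * γ 10 * γ 11 + γ 0 * γ 4 * γ 5 * γ 9 + γ 0 * γ 4 * γ 5 * γ 10 + γ 0 * γ 4 * γ 7 * γ 9 + γ 0 * γ 4 * γ 7 * γ 10 + γ 0 * γ 4 * γ 8 * γ 9 + γ 0 * γ 4 * γ 8 * γ 10 + γ 0 * γ 4 * γ 9 * γ 10 + γ 0 * γ 4 * γ 9 * γ 11 + γ 0 * γ 4 * γ 10 * γ 11 + γ 0 * γ 5 * γ 7 * γ 9 + γ 0 * γ 5 * γ 7 * γ 10 + γ 0 * γ 5 * γ 8 * γ 9 + γ 0 * γ 5 * γ 8 * γ 10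 + γ 0 * γ 7 * γ 9 * γ 10 + γ 0 * γ 7 * γ 9 * γ 11 + γ 0 * γ 7 * γ 10 * γ 11 + γ 0 * γ 8 * γ 9 * γ 10 + γ 0 * γ 8 * γ 9 * γ 11 + γ 0 * γ 8 * γ 10 * γ 11 + γ 1 * γ 2 * γ 3 * γ 4 + γ 1 * γ 2 * γ 3 * γ 5 + γ 1 * γ 2 * γ 3 * γ 10 + γ 1 * γ 2 * γ 3 * γ 11 + γ 1 * γ 2 * γ 4 * γ 5 + γ 1 * γ 2 * γ 4 * γ 7 + γ 1 * γ 2 * γ 4 * γ 8 + γ 1 * γ 2 * γ 4 * γ 10 + γ 1 * γ 2 * γ 4 * γ 11 + γ 1 * γ 2 * γ 5 * γ 7 + γ 1 * γ 2 * γ 5 * γ 8 + γ 1 * γ 2 * γ 7 * γ 10 + γ 1 * γ 2 * γ 7 * γ 11 + γ 1 * γ 2 * γ 8 * γ 10 + γ 1 * γ 2 * γ 8 * γ 11 + γ 1 * γ 3 * γ 4 * γ 6 + γ 1 * γ 3 * γ 4 * γ 7 + γ 1 * γ 3 * γ 4 * γ 9 + γ 1 * γ 3 * γ 4 * γ 10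 + γ 1 * γ 3 * γ 5 * γ 6 + γ 1 * γ 3 * γ 5 * γ 7 + γ 1 * γ 3 * γ 5 * γ 9 + γ 1 * γ 3 * γ 5 * γ 10 + γ 1 * γ 3 * γ 6 * γ 10 + γ 1 * γ 3 * γ 6 * γ 11 + γ 1 * γ 3 * γ 7 * γ 10 + γ 1 * γ 3 * γ 7 * γ 11 + γ 1 * γ 3 * γ 9 * γ 10 + γ 1 * γ 3 * γ 9 * γ 11 + γ 1 * γ 3 * γ 10 * γ 11 + γ 1 * γ 4 * γ 5 * γ 6 + γ 1 * γ 4 * γ 5 * γ 7 + γ 1 * γ 4 * γ 5 * γ 9 + γ 1 * γ 4 * γ 5 * γ 10 + γ 1 * γ 4 * γ 6 * γ 7 + γ 1 * γ 4 * γ 6 * γ 8 + γ 1 * γ 4 * γ 6 * γ 10 + γ 1 * γ 4 * γ 6 * γ 11 + γ 1 * γ 4 * γ 7 * γ 8 + γ 1 * γ 4 * γ 7 * γ 9 + γ 1 * γ 4 * γ 7 * γ 11 + γ 1 * γ 4 * γ 8 * γ 9 + γ 1 * γ 4 * γ 8 * γ 10 + γ 1 * γ 4 * γ 9 * γ 10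 + γ 1 * γ 4 * γ 9 * γ 11 + γ 1 * γ 4 * γ 10 * γ 11 + γ 1 * γ 5 * γ 6 * γ 7 + γ 1 * γ 5 * γ 6 * γ 8 + γ 1 * γ 5 * γ 7 * γ 8 + γ 1 * γ 5 * γ 7 * γ 9 + γ 1 * γ 5 * γ 7 * γ 10 + γ 1 * γ 5 * γ 8 * γ 9 + γ 1 * γ 5 * γ 8 * γ 10 + γ 1 * γ 6 * γ 7 * γ 10 + γ 1 * γ 6 * γ 7 * γ 11 + γ 1 * γ 6 * γ 8 * γ 10 + γ 1 * γ 6 * γ 8 * γ 11 + γ 1 * γ 7 * γ 8 * γ 10 + γ 1 * γ 7 * γ 8 * γ 11 + γ 1 * γ 7 * γ 9 * γ 10 + γ 1 * γ 7 * γ 9 * γ 11 + γ 1 * γ 7 * γ 10 * γ 11 + γ 1 * γ 8 * γ 9 * γ 10 + γ 1 * γ 8 * γ 9 * γ 11 + γ 1 * γ 8 * γ 10 * γ 11 + γ 2 * γ 3 * γ 4 * γ 6 + γ 2 * γ 3 * γ 4 * γ 7 + γ 2 * γ 3 * γ 5 * γ 6 + γ 2 * γ 3 * γ 5 * γ 7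 + γ 2 * γ 3 * γ 6 * γ 10 + γ 2 * γ 3 * γ 6 * γ 11 + γ 2 * γ 3 * γ 7 * γ 10 + γ 2 * γ 3 * γ 7 * γ 11 + γ 2 * γ 4 * γ 5 * γ 6 + γ 2 * γ 4 * γ 5 * γ 7 + γ 2 * γ 4 * γ 6 * γ 7 + γ 2 * γ 4 * γ 6 * γ 8 + γ 2 * γ 4 * γ 6 * γ 10 + γ 2 * γ 4 * γ 6 * γ 11 + γ 2 * γ 4 * γ 7 * γ 8 + γ 2 * γ 4 * γ 7 * γ 10 + γ 2 * γ 4 * γ 7 * γ 11 + γ 2 * γ 5 * γ 6 * γ 7 + γ 2 * γ 5 * γ 6 * γ 8 + γ 2 * γ 5 * γ 7 * γ 8 + γ 2 * γ 6 * γ 7 * γ 10 + γ 2 * γ 6 * γ 7 * γ 11 + γ 2 * γ 6 * γ 8 * γ 10 + γ 2 * γ 6 * γ 8 * γ 11 + γ 2 * γ 7 * γ 8 * γ 10 + γ 2 * γ 7 * γ 8 * γ 11 + γ 3 * γ 4 * γ 6 * γ 9 + γ 3 * γ 4 * γ 6 * γ 10 + γ 3 * γ 4 * γ 7 * γ 9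 + γ 3 * γ 4 * γ 7 * γ 10 + γ 3 * γ 5 * γ 6 * γ 9 + γ 3 * γ 5 * γ 6 * γ 10 + γ 3 * γ 5 * γ 7 * γ 9 + γ 3 * γ 5 * γ 7 * γ 10 + γ 3 * γ 6 * γ 9 * γ 10 + γ 3 * γ 6 * γ 9 * γ 11 + γ 3 * γ 6 * γ 10 * γ 11 + γ 3 * γ 7 * γ 9 * γ 10 + γ 3 * γ 7 * γ 9 * γ 11 + γ 3 * γ 7 * γ 10 * γ 11 + γ 4 * γ 5 * γ 6 * γ 9 + γ 4 * γ 5 * γ 6 * γ 10 + γ 4 * γ 5 * γ 7 * γ 9 + γ 4 * γ 5 * γ 7 * γ 10 + γ 4 * γ 6 * γ 7 * γ 9 + γ 4 * γ 6 * γ 7 * γ 10 + γ 4 * γ 6 * γ 8 * γ 9 + γ 4 * γ 6 * γ 8 * γ 10 + γ 4 * γ 6 * γ 9 * γ 10 + γ 4 * γ 6 * γ 9 * γ 11 + γ 4 * γ 6 * γ 10 * γ 11 + γ 4 * γ 7 * γ 8 * γ 9 + γ 4 * γ 7 * γ 8 * γ 10 + γ 4 * γ 7 * γ 9 * γ 10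 + γ 4 * γ 7 * γ 9 * γ 11 + γ 4 * γ 7 * γ 10 * γ 11 + γ 5 * γ 6 * γ 7 * γ 9 + γ 5 * γ 6 * γ 7 * γ 10 + γ 5 * γ 6 * γ 8 * γ 9 + γ 5 * γ 6 * γ 8 * γ 10 + γ 5 * γ 7 * γ 8 * γ 9 + γ 5 * γ 7 * γ 8 * γ 10 + γ 6 * γ 7 * γ 9 * γ 10 + γ 6 * γ 7 * γ 9 * γ 11 + γ 6 * γ 7 * γ 10 * γ 11 + γ 6 * γ 8 * γ 9 * γ 10 + γ 6 * γ 8 * γ 9 * γ 11 + γ 6 * γ 8 * γ 10 * γ 11 + γ 7 * γ 8 * γ 9 * γ 10 + γ 7 * γ 8 * γ 9 * γ 11 + γ 7 * γ 8 * γ 10 * γ 11 := by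
    unfold latDabs; ring
  rw [h]
  repeat' first
  | exact hγ _
  | apply add_pos
  | apply mul_pos

set_option maxHeartbeats 2000000 in
lemma cn_abs (a b c e x1 x4 x7 x10 : ℝ) :
    (!![a, -x7, 0, -x1;
     -x7, b, -x4, 0;
     0, -x4, c, -x10;
     -x1, 0, -x10, e] : Matrix (Fin 4) (Fin 4) ℝ) *
    !![- x4 * x4 * e - x10 * x10 * b + b * c * e, x1 * x4 * x10 - x7 * x10 * x10 + x7 * c * e, x1 * x10 * b + x4 * x7 * e, - x1 * x4 * x4 + x1 * b * c + x4 * x7 * x10;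
     x1 * x4 * x10 - x7 * x10 * x10 + x7 * c * e, - x1 * x1 * c - x10 * x10 * a + a * c * e, - x1 * x1 * x4 + x1 * x7 * x10 + x4 * a * e, x1 * x7 * c + x4 * x10 * a;
     x1 * x10 * b + x4 * x7 * e, - x1 * x1 * x4 + x1 * x7 * x10 + x4 * a * e, - x1 * x1 * b - x7 * x7 * e + a * b * e, x1 * x4 * x7 - x7 * x7 * x10 + x10 * a * b;
     - x1 * x4 * x4 + x1 * b * c + x4 * x7 * x10, x1 * x7 * c + x4 * x10 * a, x1 * x4 * x7 - x7 * x7 * x10 + x10 * a * b, - x4 * x4 * a - x7 * x7 * c + a * b * c] = (latDabs a b c e x1 x4 x7 x10) • (1 : Matrix (Fin 4) (Fin 4) ℝ) := by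
  ext i j
  fin_cases i <;> fin_cases j <;>
    (simp [latDabs, Matrix.mul_apply, Fin.sum_univ_four, Matrix.smul_apply, Matrix.one_apply] <;>
      ring)

set_option maxHeartbeats 2000000 in
lemma det3_abs (a b c e x0 x1 x2 x3 x4 x5 x6 x7 x9 x10 : ℝ) :
    (!![-(x0 * x6 * (- x4 * x4 * e - x10 * x10 * b + b * c * e)), -(x0 * x5 * (x1 * x10 * b + x4 * x7 * e)), -(x0 * x2 * (- x1 * x4 * x4 + x1 * b * c + x4 * x7 * x10));
        -(x3 * x6 * (x1 * x4 * x10 - x7 * x10 * x10 + x7 * c * e)), -(x3 * x5 * (- x1 * x1 * x4 + x1 * x7 * x10 + x4 * a * e)), -(x3 * x2 * (x1 * x7 * c + x4 * x10 * a));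
        -(x9 * x6 * (- x1 * x4 * x4 + x1 * b * c + x4 * x7 * x10)), -(x9 * x5 * (x1 * x4 * x7 - x7 * x7 * x10 + x10 * a * b)), -(x9 * x2 * (- x4 * x4 * a - x7 * x7 * c + a * b * c))] : Matrix (Fin 3) (Fin 3) ℝ).det =
      -(x0 * x2 * x3 * x4 * x5 * x6 * x9) * (latDabs a b c e x1 x4 x7 x10) * (latDabs a b c e x1 x4 x7 x10) := by
  rw [Matrix.det_fin_three]
  unfold latDabs
  simp [Matrix.vecHead, Matrix.vecTail]
  norm_num
  ring

set_option maxHeartbeats 2000000 in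
lemma det2_abs (a b c e x0 x1 x2 x3 x4 x5 x7 x10 : ℝ) :
    (!![-(x0 * x5 * (x1 * x10 * b + x4 * x7 * e)), -(x0 * x2 * (- x1 * x4 * x4 + x1 * b * c + x4 * x7 * x10));
        -(x3 * x5 * (- x1 * x1 * x4 + x1 * x7 * x10 + x4 * a * e)), -(x3 * x2 * (x1 * x7 * c + x4 * x10 * a))] : Matrix (Fin 2) (Fin 2) ℝ).det =
      -(x0 * x1 * x2 * x3 * x4 * x5) * (latDabs a b c e x1 x4 x7 x10) := by
  rw [Matrix.det_fin_two]
  unfold latDabs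
  norm_num
  ring

set_option maxHeartbeats 2000000 in
lemma blockC_eq (γ : Fin 12 → ℝ) :
    blockC γ = !![(γ 0 + γ 1 + γ 6 + γ 7), -γ 7, 0, -γ 1;
      -γ 7, (γ 3 + γ 4 + γ 7 + γ 8), -γ 4, 0;
      0, -γ 4, (γ 4 + γ 5 + γ 10 + γ 11), -γ 10;
      -γ 1, 0, -γ 10, (γ 1 + γ 2 + γ 9 + γ 10)] := by
  ext i j
  fin_cases i <;> fin_cases j <;>
    (simp (config := { decide := true }) [blockC, kirchhoff, condWt, edgeEnds, intV,
      Fin.sum_univ_succ, Fin.succ, Prod.ext_iff] <;> ring)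

set_option maxHeartbeats 2000000 in
lemma blockC_inv (γ : Fin 12 → ℝ) (hγ : ∀ e, 0 < γ e) :
    (blockC γ)⁻¹ = (latDabs (γ 0 + γ 1 + γ 6 + γ 7) (γ 3 + γ 4 + γ 7 + γ 8) (γ 4 + γ 5 + γ 10 + γ 11) (γ 1 + γ 2 + γ 9 + γ 10) (γ 1) (γ 4) (γ 7) (γ 10))⁻¹ •
    !![- γ 4 * γ 4 * (γ 1 + γ 2 + γ 9 + γ 10) - γ 10 * γ 10 * (γ 3 + γ 4 + γ 7 + γ 8) + (γ 3 + γ 4 + γ 7 + γ 8) * (γ 4 + γ 5 + γ 10 + γ 11) * (γ 1 + γ 2 + γ 9 + γ 10), γ 1 * γ 4 * γ 10 - γ 7 * γ 10 * γ 10 + γ 7 * (γ 4 + γ 5 + γ 10 + γ 11) * (γ 1 + γ 2 + γ 9 + γ 10), γ 1 * γ 10 * (γ 3 + γ 4 + γ 7 + γ 8) + γ 4 * γ 7 * (γ 1 + γ 2 + γ 9 + γ 10), - γ 1 * γ 4 * γ 4 + γ 1 * (γ 3 + γ 4 + γ 7 + γ 8) * (γ 4 + γ 5 + γ 10 + γ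 11) + γ 4 * γ 7 * γ 10;
      γ 1 * γ 4 * γ 10 - γ 7 * γ 10 * γ 10 + γ 7 * (γ 4 + γ 5 + γ 10 + γ 11) * (γ 1 + γ 2 + γ 9 + γ 10), - γ 1 * γ 1 * (γ 4 + γ 5 + γ 10 + γ 11) - γ 10 * γ 10 * (γ 0 + γ 1 + γ 6 + γ 7) + (γ 0 + γ 1 + γ 6 + γ 7) * (γ 4 + γ 5 + γ 10 + γ 11) * (γ 1 + γ 2 + γ 9 + γ 10), - γ 1 * γ 1 * γ 4 + γ 1 * γ 7 * γ 10 + γ 4 * (γ 0 + γ 1 + γ 6 + γ 7) * (γ 1 + γ 2 + γ 9 + γ 10), γ 1 * γ 7 * (γ 4 + γ 5 + γ 10 + γ 11) + γ 4 * γ 10 * (γ 0 + γ 1 + γ 6 + γ 7);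
      γ 1 * γ 10 * (γ 3 + γ 4 + γ 7 + γ 8) + γ 4 * γ 7 * (γ 1 + γ 2 + γ 9 + γ 10), - γ 1 * γ 1 * γ 4 + γ 1 * γ 7 * γ 10 + γ 4 * (γ 0 + γ 1 + γ 6 + γ 7) * (γ 1 + γ 2 + γ 9 + γ 10), - γ 1 * γ 1 * (γ 3 + γ 4 + γ 7 + γ 8) - γ 7 * γ 7 * (γ 1 + γ 2 + γ 9 + γ 10) + (γ 0 + γ 1 + γ 6 + γ 7) * (γ 3 + γ 4 + γ 7 + γ 8) * (γ 1 + γ 2 + γ 9 + γ 10), γ 1 * γ 4 * γ 7 - γ 7 * γ 7 * γ 10 + γ 10 * (γ 0 + γ 1 + γ 6 + γ 7) * (γ 3 + γ 4 + γ 7 + γ 8);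
      - γ 1 * γ 4 * γ 4 + γ 1 * (γ 3 + γ 4 + γ 7 + γ 8) * (γ 4 + γ 5 + γ 10 + γ 11) + γ 4 * γ 7 * γ 10, γ 1 * γ 7 * (γ 4 + γ 5 + γ 10 + γ 11) + γ 4 * γ 10 * (γ 0 + γ 1 + γ 6 + γ 7), γ 1 * γ 4 * γ 7 - γ 7 * γ 7 * γ 10 + γ 10 * (γ 0 + γ 1 + γ 6 + γ 7) * (γ 3 + γ 4 + γ 7 + γ 8), - γ 4 * γ 4 * (γ 0 + γ 1 + γ 6 + γ 7) - γ 7 * γ 7 * (γ 4 + γ 5 + γ 10 + γ 11) + (γ 0 + γ 1 + γ 6 + γ 7) * (γ 3 + γ 4 + γ 7 + γ 8) * (γ 4 + γ 5 + γ 10 + γ 11)] := by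
  apply Matrix.inv_eq_right_inv
  rw [blockC_eq, Matrix.mul_smul,
    cn_abs (γ 0 + γ 1 + γ 6 + γ 7) (γ 3 + γ 4 + γ 7 + γ 8) (γ 4 + γ 5 + γ 10 + γ 11) (γ 1 + γ 2 + γ 9 + γ 10) (γ 1) (γ 4) (γ 7) (γ 10),
    smul_smul, inv_mul_cancel₀ (latD_pos γ hγ).ne', one_smul]

set_option maxHeartbeats 2000000 in
lemma sub3_eq (γ : Fin 12 → ℝ) (hγ : ∀ e, 0 < γ e) :
    (dtn γ).submatrix ![0, 1, 6] ![7, 4, 5] = (latDabs (γ 0 + γ 1 + γ 6 + γ 7) (γ 3 + γ 4 + γ 7 + γ 8) (γ 4 + γ 5 + γ 10 + γ 11) (γ 1 + γ 2 + γ 9 + γ 10) (γ 1) (γ 4) (γ 7) (γ 10))⁻¹ •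
    !![-(γ 0 * γ 6 * (- γ 4 * γ 4 * (γ 1 + γ 2 + γ 9 + γ 10) - γ 10 * γ 10 * (γ 3 + γ 4 + γ 7 + γ 8) + (γ 3 + γ 4 + γ 7 + γ 8) * (γ 4 + γ 5 + γ 10 + γ 11) * (γ 1 + γ 2 + γ 9 + γ 10))), -(γ 0 * γ 5 * (γ 1 * γ 10 * (γ 3 + γ 4 + γ 7 + γ 8) + γ 4 * γ 7 * (γ 1 + γ 2 + γ 9 + γ 10))), -(γ 0 * γ 2 * (- γ 1 * γ 4 * γ 4 + γ 1 * (γ 3 + γ 4 + γ 7 + γ 8) * (γ 4 + γ 5 + γ 10 + γ 11) + γ 4 * γ 7 * γ 10));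
      -(γ 3 * γ 6 * (γ 1 * γ 4 * γ 10 - γ 7 * γ 10 * γ 10 + γ 7 * (γ 4 + γ 5 + γ 10 + γ 11) * (γ 1 + γ 2 + γ 9 + γ 10))), -(γ 3 * γ 5 * (- γ 1 * γ 1 * γ 4 + γ 1 * γ 7 * γ 10 + γ 4 * (γ 0 + γ 1 + γ 6 + γ 7) * (γ 1 + γ 2 + γ 9 + γ 10))), -(γ 3 * γ 2 * (γ 1 * γ 7 * (γ 4 + γ 5 + γ 10 + γ 11) + γ 4 * γ 10 * (γ 0 + γ 1 + γ 6 + γ 7)));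
      -(γ 9 * γ 6 * (- γ 1 * γ 4 * γ 4 + γ 1 * (γ 3 + γ 4 + γ 7 + γ 8) * (γ 4 + γ 5 + γ 10 + γ 11) + γ 4 * γ 7 * γ 10)), -(γ 9 * γ 5 * (γ 1 * γ 4 * γ 7 - γ 7 * γ 7 * γ 10 + γ 10 * (γ 0 + γ 1 + γ 6 + γ 7) * (γ 3 + γ 4 + γ 7 + γ 8))), -(γ 9 * γ 2 * (- γ 4 * γ 4 * (γ 0 + γ 1 + γ 6 + γ 7) - γ 7 * γ 7 * (γ 4 + γ 5 + γ 10 + γ 11) + (γ 0 + γ 1 + γ 6 + γ 7) * (γ 3 + γ 4 + γ 7 + γ 8) * (γ 4 + γ 5 + γ 10 + γ 11)))] := by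
  unfold dtn
  rw [blockC_inv γ hγ]
  ext i j
  fin_cases i <;> fin_cases j <;>
    (simp (config := { decide := true }) [blockA, blockB, kirchhoff, condWt, edgeEnds, bdV,
      intV, Matrix.sub_apply, Matrix.mul_apply, Matrix.smul_apply, Matrix.transpose_apply,
      Fin.sum_univ_four, Fin.sum_univ_succ, Fin.succ, Prod.ext_iff] <;> ring)

set_option maxHeartbeats 2000000 in
lemma sub2_eq (γ : Fin 12 → ℝ) (hγ : ∀ e, 0 < γ e) :
    (dtn γ).submatrix ![0, 1] ![4, 5] = (latDabs (γ 0 + γ 1 + γ 6 + γ 7) (γ 3 + γ 4 + γ 7 + γ 8) (γ 4 + γ 5 + γ 10 + γ 11) (γ 1 + γ 2 + γ 9 + γ 10) (γ 1) (γ 4) (γ 7) (γ 10))⁻¹ •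
    !![-(γ 0 * γ 5 * (γ 1 * γ 10 * (γ 3 + γ 4 + γ 7 + γ 8) + γ 4 * γ 7 * (γ 1 + γ 2 + γ 9 + γ 10))), -(γ 0 * γ 2 * (- γ 1 * γ 4 * γ 4 + γ 1 * (γ 3 + γ 4 + γ 7 + γ 8) * (γ 4 + γ 5 + γ 10 + γ 11) + γ 4 * γ 7 * γ 10));
      -(γ 3 * γ 5 * (- γ 1 * γ 1 * γ 4 + γ 1 * γ 7 * γ 10 + γ 4 * (γ 0 + γ 1 + γ 6 + γ 7) * (γ 1 + γ 2 + γ 9 + γ 10))), -(γ 3 * γ 2 * (γ 1 * γ 7 * (γ 4 + γ 5 + γ 10 + γ 11) + γ 4 * γ 10 * (γ 0 + γ 1 + γ 6 + γ 7)))] := by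
  unfold dtn
  rw [blockC_inv γ hγ]
  ext i j
  fin_cases i <;> fin_cases j <;>
    (simp (config := { decide := true }) [blockA, blockB, kirchhoff, condWt, edgeEnds, bdV,
      intV, Matrix.sub_apply, Matrix.mul_apply, Matrix.smul_apply, Matrix.transpose_apply,
      Fin.sum_univ_four, Fin.sum_univ_succ, Fin.succ, Prod.ext_iff] <;> ring)

set_option maxHeartbeats 2000000 in
/-- `γ₂ · |det Λ({1,2,7},{8,5,6})| = γ₇ γ₁₀ · |det Λ({1,2},{5,6})|`;
equivalently the ratio of the two absolute subdeterminants is `γ₇γ₁₀/γ₂`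
(0-based: `γ 1`, `γ 6`, `γ 9`). -/
theorem gamma_ratio_127_856 (γ : Fin 12 → ℝ) (hγ : ∀ e, 0 < γ e) :
    γ 1 * |((dtn γ).submatrix ![0, 1, 6] ![7, 4, 5]).det| =
        γ 6 * γ 9 * |((dtn γ).submatrix ![0, 1] ![4, 5]).det| ∧
    |((dtn γ).submatrix ![0, 1, 6] ![7, 4, 5]).det| /
        |((dtn γ).submatrix ![0, 1] ![4, 5]).det| = γ 6 * γ 9 / γ 1 := by
  have hd := latD_pos γ hγ
  have hd' : (latDabs (γ 0 + γ 1 + γ 6 + γ 7) (γ 3 + γ 4 + γ 7 + γ 8) (γ 4 + γ 5 + γ 10 + γ 11) (γ 1 + γ 2 + γ 9 + γ 10) (γ 1) (γ 4) (γ 7) (γ 10)) ≠ 0 := hd.ne'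
  have hX : 0 < γ 0 * γ 2 * γ 3 * γ 4 * γ 5 * γ 6 * γ 9 :=
    mul_pos (mul_pos (mul_pos (mul_pos (mul_pos (mul_pos (hγ 0) (hγ 2)) (hγ 3))
      (hγ 4)) (hγ 5)) (hγ 6)) (hγ 9)
  have hY : 0 < γ 0 * γ 1 * γ 2 * γ 3 * γ 4 * γ 5 :=
    mul_pos (mul_pos (mul_pos (mul_pos (mul_pos (hγ 0) (hγ 1)) (hγ 2)) (hγ 3)) (hγ 4)) (hγ 5)
  have e3 : ((dtn γ).submatrix ![0, 1, 6] ![7, 4, 5]).det =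
      -((γ 0 * γ 2 * γ 3 * γ 4 * γ 5 * γ 6 * γ 9) / (latDabs (γ 0 + γ 1 + γ 6 + γ 7) (γ 3 + γ 4 + γ 7 + γ 8) (γ 4 + γ 5 + γ 10 + γ 11) (γ 1 + γ 2 + γ 9 + γ 10) (γ 1) (γ 4) (γ 7) (γ 10))) := by
    rw [sub3_eq γ hγ, Matrix.det_smul,
      det3_abs (γ 0 + γ 1 + γ 6 + γ 7) (γ 3 + γ 4 + γ 7 + γ 8) (γ 4 + γ 5 + γ 10 + γ 11) (γ 1 + γ 2 + γ 9 + γ 10) (γ 0) (γ 1) (γ 2) (γ 3) (γ 4) (γ 5)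
        (γ 6) (γ 7) (γ 9) (γ 10), Fintype.card_fin]
    generalize latDabs (γ 0 + γ 1 + γ 6 + γ 7) (γ 3 + γ 4 + γ 7 + γ 8) (γ 4 + γ 5 + γ 10 + γ 11) (γ 1 + γ 2 + γ 9 + γ 10) (γ 1) (γ 4) (γ 7) (γ 10) = D at hd' ⊢
    field_simp
    rw [← mul_pow, mul_one_div_cancel hd', one_pow]
    ring
  have e2 : ((dtn γ).submatrix ![0, 1] ![4, 5]).det =
      -((γ 0 * γ 1 * γ 2 * γ 3 * γ 4 * γ 5) / (latDabs (γ 0 + γ 1 + γ 6 + γ 7) (γ 3 + γ 4 + γ 7 + γ 8) (γ 4 + γ 5 + γ 10 + γ 11) (γ 1 + γ 2 + γ 9 + γ 10) (γ 1) (γ 4) (γ 7) (γ 10))) := by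
    rw [sub2_eq γ hγ, Matrix.det_smul,
      det2_abs (γ 0 + γ 1 + γ 6 + γ 7) (γ 3 + γ 4 + γ 7 + γ 8) (γ 4 + γ 5 + γ 10 + γ 11) (γ 1 + γ 2 + γ 9 + γ 10) (γ 0) (γ 1) (γ 2) (γ 3) (γ 4) (γ 5)
        (γ 7) (γ 10), Fintype.card_fin]
    generalize latDabs (γ 0 + γ 1 + γ 6 + γ 7) (γ 3 + γ 4 + γ 7 + γ 8) (γ 4 + γ 5 + γ 10 + γ 11) (γ 1 + γ 2 + γ 9 + γ 10) (γ 1) (γ 4) (γ 7) (γ 10) = D at hd' ⊢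
    field_simp
    rw [← mul_pow, mul_one_div_cancel hd', one_pow]
    ring
  rw [e3, e2, abs_neg, abs_neg, abs_of_pos (div_pos hX hd), abs_of_pos (div_pos hY hd)]
  constructor
  · field_simp
  · rw [div_eq_div_iff (div_pos hY hd).ne' (hγ 1).ne']
    field_simp
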